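/- arXiv:2009.06612 — 3 statements merged into one kernel-verified Lean document; each statement's English description precedes it below -/
import Mathlib

section
/- For every integer n > 1, the sum over all weakly decreasing tuples (λ₁, λ₂, ..., λₙ) of nonnegative integers with λ₁ + λ₂ + ... + λₙ = n and λ₁ odd of the product C(λ₁,λ₂)·C(λ₂,λ₃)···C(λₙ,0) equals 2^(n-2). -/
open Finset

/-- Weakly decreasing tuples `(λ₁,…,λₙ)` of nonnegative integers with `λ₁+⋯+λₙ = n`. -/
def partitionTuples (n : ℕ) : Finset (Fin n → ℕ) :=
  (Finset.Nat.antidiagonalTuple n n).filter fun t => ∀ i j : Fin n, i ≤ j → t j ≤ t i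

/-- The product `C(λ₁,λ₂)·C(λ₂,λ₃)⋯C(λₙ,0)` with the convention `λ_{n+1} = 0`. -/
def binomProd (n : ℕ) (t : Fin n → ℕ) : ℕ :=
  ∏ i : Fin n, Nat.choose (t i) (if h : (i : ℕ) + 1 < n then t ⟨(i : ℕ) + 1, h⟩ else 0)

def Tset (l s : ℕ) : Finset (Fin l → ℕ) :=
  (Finset.Nat.antidiagonalTuple l s).filter fun t => ∀ i j : Fin l, i ≤ j → t j ≤ t i

def Wt (l : ℕ) (t : Fin l → ℕ) : ℕ :=
  ∏ i : Fin l, Nat.choose (t i) (if h : (i : ℕ) + 1 < l then t ⟨(i : ℕ) + 1, h⟩ else 0)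

def hd {l : ℕ} (t : Fin l → ℕ) : ℕ := if h : 0 < l then t ⟨0, h⟩ else 0

lemma mem_Tset {l s : ℕ} {t : Fin l → ℕ} :
    t ∈ Tset l s ↔ (∑ i, t i = s) ∧ ∀ i j : Fin l, i ≤ j → t j ≤ t i := by
  simp [Tset, Finset.Nat.mem_antidiagonalTuple]

lemma le_hd {l : ℕ} {t : Fin l → ℕ} (hdec : ∀ i j : Fin l, i ≤ j → t j ≤ t i)
    (j : Fin l) : t j ≤ hd t := by
  have h : 0 < l := j.pos
  rw [hd, dif_pos h]
  exact hdec ⟨0, h⟩ j (by simp [Fin.le_def])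

lemma cons_succ' {l : ℕ} (a : ℕ) (u : Fin l → ℕ) (k : ℕ) (hk : k < l) :
    Fin.cons (α := fun _ => ℕ) a u ⟨k + 1, Nat.succ_lt_succ hk⟩ = u ⟨k, hk⟩ :=
  Fin.cons_succ (α := fun _ => ℕ) a u ⟨k, hk⟩

lemma Wt_cons (l : ℕ) (a : ℕ) (u : Fin l → ℕ) :
    Wt (l + 1) (Fin.cons a u) = a.choose (hd u) * Wt l u := by
  rw [Wt, Fin.prod_univ_succ]
  congr 1
  · rw [Fin.cons_zero]
    congr 1
    simp only [Fin.val_zero]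
    rcases Nat.eq_zero_or_pos l with h | h
    · subst h; simp [hd]
    · simp only [hd, dif_pos h]
      exact (dif_pos (by omega)).trans (cons_succ' a u 0 h)
  · rw [Wt]
    refine Finset.prod_congr rfl fun i _ => ?_
    rw [show Fin.cons (α := fun _ => ℕ) a u i.succ = u i from Fin.cons_succ (α := fun _ => ℕ) a u i]
    congr 1
    · simp only [Fin.val_succ]
      rcases lt_or_ge ((i : ℕ) + 1) l with h | h
      · rw [dif_pos (by omega : (i : ℕ) + 1 + 1 < l + 1), dif_pos h]
        exact cons_succ' a u ((i : ℕ) + 1) h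
      · rw [dif_neg (by omega), dif_neg (by omega)]

def Hf (l s b : ℕ) : ℕ := ∑ t ∈ Tset l s, b.choose (hd t) * Wt l t

lemma tail_mem_Tset {l s : ℕ} {t : Fin (l + 1) → ℕ} (ht : t ∈ Tset (l + 1) s) :
    Fin.tail t ∈ Tset l (s - t 0) ∧ t 0 ≤ s ∧ hd (Fin.tail t) ≤ t 0 := by
  obtain ⟨hsum, hdec⟩ := mem_Tset.mp ht
  rw [Fin.sum_univ_succ] at hsum
  have htl : ∑ i : Fin l, Fin.tail t i = ∑ i : Fin l, t i.succ := rfl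
  refine ⟨mem_Tset.mpr ⟨by omega, fun i j hij => hdec i.succ j.succ (by simpa using hij)⟩,
    by omega, ?_⟩
  rcases Nat.eq_zero_or_pos l with h | h
  · subst h; simp [hd]
  · rw [hd, dif_pos h]
    exact hdec 0 (Fin.succ ⟨0, h⟩) (by simp [Fin.le_def])

lemma cons_dec {l a : ℕ} {u : Fin l → ℕ} (hdec : ∀ i j : Fin l, i ≤ j → u j ≤ u i)
    (hha : hd u ≤ a) :
    ∀ i j : Fin (l + 1), i ≤ j → Fin.cons (α := fun _ => ℕ) a u j ≤ Fin.cons (α := fun _ => ℕ) a u i := by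
  intro i j hij
  rcases i with ⟨iv, hiv⟩
  rcases j with ⟨jv, hjv⟩
  have hij' : iv ≤ jv := hij
  rcases iv with _ | iv' <;> rcases jv with _ | jv'
  · exact le_rfl
  · have e1 : Fin.cons (α := fun _ => ℕ) a u ⟨0, hiv⟩ = a := rfl
    have e2 : Fin.cons (α := fun _ => ℕ) a u ⟨jv' + 1, hjv⟩ = u ⟨jv', by omega⟩ :=
      cons_succ' a u jv' (by omega)
    rw [e1, e2]
    exact le_trans (le_hd hdec _) hha
  · omega
  · have e1 : Fin.cons (α := fun _ => ℕ) a u ⟨iv' + 1, hiv⟩ = u ⟨iv', by omega⟩ :=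
      cons_succ' a u iv' (by omega)
    have e2 : Fin.cons (α := fun _ => ℕ) a u ⟨jv' + 1, hjv⟩ = u ⟨jv', by omega⟩ :=
      cons_succ' a u jv' (by omega)
    rw [e1, e2]
    exact hdec _ _ (by simp [Fin.le_def]; omega)

lemma cons_mem_Tset {l s a : ℕ} {u : Fin l → ℕ} (hu : u ∈ Tset l (s - a))
    (has : a ≤ s) (hha : hd u ≤ a) : Fin.cons a u ∈ Tset (l + 1) s := by
  obtain ⟨hsum, hdec⟩ := mem_Tset.mp hu
  refine mem_Tset.mpr ⟨?_, cons_dec hdec hha⟩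
  rw [Fin.sum_univ_succ, Fin.cons_zero]
  have : ∑ i : Fin l, Fin.cons (α := fun _ => ℕ) a u i.succ = ∑ i : Fin l, u i :=
    Finset.sum_congr rfl fun i _ => Fin.cons_succ (α := fun _ => ℕ) a u i
  omega

lemma fiber (l s a : ℕ) (has : a ≤ s) :
    ∑ t ∈ (Tset (l + 1) s).filter (fun t => t 0 = a), Wt (l + 1) t = Hf l (s - a) a := by
  have h2 : ∑ u ∈ (Tset l (s - a)).filter (fun u => ¬ hd u ≤ a),
      a.choose (hd u) * Wt l u = 0 := by
    refine Finset.sum_eq_zero fun u hu => ?_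
    have h := (Finset.mem_filter.mp hu).2
    rw [Nat.choose_eq_zero_of_lt (by omega), zero_mul]
  rw [Hf, ← Finset.sum_filter_add_sum_filter_not (Tset l (s - a)) (fun u => hd u ≤ a),
    h2, add_zero]
  refine Finset.sum_nbij' (fun t => Fin.tail t) (fun u => Fin.cons a u) ?_ ?_ ?_ ?_ ?_
  · intro t ht
    obtain ⟨htm, ht0⟩ := Finset.mem_filter.mp ht
    obtain ⟨hmem, _, hhd⟩ := tail_mem_Tset htm
    rw [ht0] at hmem hhd
    exact Finset.mem_filter.mpr ⟨hmem, hhd⟩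
  · intro u hu
    obtain ⟨hum, hhd⟩ := Finset.mem_filter.mp hu
    exact Finset.mem_filter.mpr ⟨cons_mem_Tset hum has hhd, Fin.cons_zero (α := fun _ => ℕ) a u⟩
  · intro t ht
    obtain ⟨_, ht0⟩ := Finset.mem_filter.mp ht
    rw [← ht0]
    exact Fin.cons_self_tail t
  · intro u _
    exact Fin.tail_cons (α := fun _ => ℕ) a u
  · intro t ht
    obtain ⟨_, ht0⟩ := Finset.mem_filter.mp ht
    conv_lhs => rw [← Fin.cons_self_tail t, ht0]
    exact Wt_cons l a (Fin.tail t)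

lemma Tset_zero (l : ℕ) : Tset l 0 = {0} := by
  ext t
  rw [mem_Tset, Finset.mem_singleton]
  constructor
  · rintro ⟨hs, -⟩
    funext i
    exact (Finset.sum_eq_zero_iff.mp hs) i (Finset.mem_univ i)
  · rintro rfl
    simp

lemma Hf_s_zero (l b : ℕ) : Hf l 0 b = 1 := by
  rw [Hf, Tset_zero, Finset.sum_singleton]
  simp [hd, Wt]

lemma Hf_b_zero (l s : ℕ) (hs : s ≠ 0) : Hf l s 0 = 0 := by
  refine Finset.sum_eq_zero fun t ht => ?_
  obtain ⟨hsum, hdec⟩ := mem_Tset.mp ht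
  rcases Nat.eq_zero_or_pos (hd t) with h | h
  · have hz : ∑ i, t i = 0 :=
      Finset.sum_eq_zero fun i _ => le_antisymm (h ▸ le_hd hdec i) (Nat.zero_le _)
    omega
  · rw [Nat.choose_eq_zero_of_lt h, zero_mul]

lemma Hf_succ (l s b : ℕ) :
    Hf (l + 1) s b = ∑ a ∈ range (s + 1), b.choose a * Hf l (s - a) a := by
  rw [Hf]
  have hmap : ∀ t ∈ Tset (l + 1) s, t 0 ∈ range (s + 1) := fun t ht =>
    Finset.mem_range.mpr (by have := (tail_mem_Tset ht).2.1; omega)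
  rw [← Finset.sum_fiberwise_of_maps_to hmap (fun t => b.choose (hd t) * Wt (l + 1) t)]
  refine Finset.sum_congr rfl fun a ha => ?_
  have has : a ≤ s := by have := Finset.mem_range.mp ha; omega
  rw [← fiber l s a has, Finset.mul_sum]
  refine Finset.sum_congr rfl fun t ht => ?_
  obtain ⟨htm, ht0⟩ := Finset.mem_filter.mp ht
  have hh : hd t = a := by rw [hd, dif_pos (Nat.succ_pos l)]; exact ht0
  rw [hh]

lemma Hf_eq : ∀ l s b : ℕ, s ≤ l → Hf l s b = (b + s - 1).choose s := by
  intro l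
  induction l with
  | zero =>
    intro s b hs
    have : s = 0 := by omega
    subst this
    rw [Hf_s_zero]
    simp
  | succ l ih =>
    intro s b hs
    rcases Nat.eq_zero_or_pos s with h0 | h0
    · subst h0
      rw [Hf_s_zero]
      simp
    · rw [Hf_succ]
      have hterm : ∀ a ∈ range (s + 1),
          b.choose a * Hf l (s - a) a = b.choose a * (s - 1).choose (s - a) := by
        intro a ha
        have ha' : a ≤ s := by have := Finset.mem_range.mp ha; omega
        rcases Nat.eq_zero_or_pos a with h | h
        · subst h
          rw [Nat.sub_zero, Hf_b_zero l s (by omega), Nat.choose_eq_zero_of_lt (by omega : s - 1 < s)]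
        · rw [ih (s - a) a (by omega)]
          have he : a + (s - a) - 1 = s - 1 := by omega
          rw [he]
      rw [Finset.sum_congr rfl hterm]
      have hv := Nat.add_choose_eq b (s - 1) s
      rw [Finset.Nat.sum_antidiagonal_eq_sum_range_succ_mk] at hv
      rw [show b + s - 1 = b + (s - 1) by omega, hv]

lemma even_sum_choose (N : ℕ) (hN : 1 ≤ N) :
    ∑ k ∈ range (N + 1), (if Even k then N.choose k else 0) = 2 ^ (N - 1) := by
  have key : (2 : ℤ) * ∑ k ∈ range (N + 1), (if Even k then (N.choose k : ℤ) else 0)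
      = 2 ^ N := by
    rw [Finset.mul_sum]
    have hterm : ∀ k ∈ range (N + 1),
        2 * (if Even k then (N.choose k : ℤ) else 0)
          = (-1) ^ k * (N.choose k : ℤ) + (N.choose k : ℤ) := by
      intro k _
      rcases Nat.even_or_odd k with h | h
      · rw [if_pos h, h.neg_one_pow]; ring
      · rw [if_neg (Nat.not_even_iff_odd.mpr h), h.neg_one_pow]; ring
    rw [Finset.sum_congr rfl hterm, Finset.sum_add_distrib,
      Int.alternating_sum_range_choose, if_neg (by omega), zero_add]
    exact_mod_cast congrArg (Nat.cast : ℕ → ℤ) (Nat.sum_range_choose N)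
  have hc : ∑ k ∈ range (N + 1), (if Even k then (N.choose k : ℤ) else 0)
      = ((∑ k ∈ range (N + 1), if Even k then N.choose k else 0 : ℕ) : ℤ) := by
    rw [Nat.cast_sum]
    exact Finset.sum_congr rfl fun k _ => by
      rcases Nat.even_or_odd k with h | h
      · simp [h]
      · simp [Nat.not_even_iff_odd.mpr h]
  rw [hc] at key
  have key2 : 2 * (∑ k ∈ range (N + 1), if Even k then N.choose k else 0) = 2 ^ N := by
    exact_mod_cast key
  have hp : 2 ^ N = 2 * 2 ^ (N - 1) := by
    rw [← pow_succ']
    congr 1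
    omega
  omega

theorem stmt3' (n : ℕ) (hn : 1 < n) :
    ∑ t ∈ (Tset n n).filter (fun t => Odd (t ⟨0, Nat.zero_lt_of_lt hn⟩)),
      Wt n t = 2 ^ (n - 2) := by
  obtain ⟨m, rfl⟩ : ∃ m, n = m + 1 := ⟨n - 1, by omega⟩
  have hm : 1 ≤ m := by omega
  simp only [show (⟨0, Nat.zero_lt_of_lt hn⟩ : Fin (m + 1)) = 0 by ext; simp]
  have hmap : ∀ t ∈ (Tset (m + 1) (m + 1)).filter (fun t => Odd (t 0)),
      t 0 ∈ range (m + 2) := fun t ht =>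
    Finset.mem_range.mpr (by
      have := (tail_mem_Tset (Finset.mem_filter.mp ht).1).2.1; omega)
  rw [← Finset.sum_fiberwise_of_maps_to hmap (Wt (m + 1))]
  have inner : ∀ a ∈ range (m + 2),
      (∑ t ∈ ((Tset (m + 1) (m + 1)).filter (fun t => Odd (t 0))).filter
        (fun t => t 0 = a), Wt (m + 1) t)
      = if Even (a + 1) then m.choose (m + 1 - a) else 0 := by
    intro a ha
    have ha' : a ≤ m + 1 := by have := Finset.mem_range.mp ha; omega
    rw [Finset.filter_filter]
    by_cases hodd : Odd a
    · have ha1 : 1 ≤ a := by rcases hodd with ⟨c, rfl⟩; omega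
      rw [if_pos (by rw [Nat.even_add_one]; exact Nat.not_even_iff_odd.mpr hodd |> fun h => h)]
      have hset : (Tset (m + 1) (m + 1)).filter (fun t => Odd (t 0) ∧ t 0 = a)
          = (Tset (m + 1) (m + 1)).filter (fun t => t 0 = a) := by
        refine Finset.filter_congr fun t _ => ?_
        constructor
        · exact fun h => h.2
        · exact fun h => ⟨h ▸ hodd, h⟩
      rw [hset, fiber m (m + 1) a ha', Hf_eq m (m + 1 - a) a (by omega),
        show a + (m + 1 - a) - 1 = m by omega]
    · rw [if_neg (by rw [Nat.even_add_one]; exact fun h => h (Nat.not_odd_iff_even.mp hodd))]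
      rw [Finset.filter_false_of_mem (fun t _ => by rintro ⟨h1, h2⟩; exact hodd (h2 ▸ h1)), Finset.sum_empty]
  rw [Finset.sum_congr rfl inner, Finset.sum_range_succ']
  rw [show (if Even (0 + 1) then m.choose (m + 1 - 0) else 0) = 0 by simp, add_zero]
  have hterm2 : ∀ k ∈ range (m + 1),
      (if Even (k + 1 + 1) then m.choose (m + 1 - (k + 1)) else 0)
        = if Even k then m.choose k else 0 := by
    intro k hk
    have hk' : k ≤ m := by have := Finset.mem_range.mp hk; omega
    have he : Even (k + 1 + 1) ↔ Even k := by
      rw [Nat.even_add_one, Nat.even_add_one]; tauto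
    by_cases h : Even k
    · rw [if_pos (he.mpr h), if_pos h, show m + 1 - (k + 1) = m - k by omega,
        Nat.choose_symm hk']
    · rw [if_neg (fun hh => h (he.mp hh)), if_neg h]
  rw [Finset.sum_congr rfl hterm2, even_sum_choose m hm]
  congr 1

theorem stmt3 (n : ℕ) (hn : 1 < n) :
    ∑ t ∈ (partitionTuples n).filter (fun t => Odd (t ⟨0, Nat.zero_lt_of_lt hn⟩)),
      binomProd n t = 2 ^ (n - 2) := by
  exact stmt3' n hn
end

section
/- For every integer n > 1, the sum over all weakly decreasing tuples (λ₁, λ₂, ..., λₙ) of nonnegative integers with λ₁ + λ₂ + ... + λₙ = n and λ₁ odd of the product C(λ₁,λ₂)·C(λ₂,λ₃)···C(λₙ,0) multiplied by the rational number n/λ₁ equals 2^(n-1). -/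
open Finset

/-- Weakly decreasing tuples of length `m` summing to `s`. -/
def D (m s : ℕ) : Finset (Fin m → ℕ) :=
  (Finset.Nat.antidiagonalTuple m s).filter fun t => ∀ i j : Fin m, i ≤ j → t j ≤ t i

lemma mem_D {m s : ℕ} {t : Fin m → ℕ} :
    t ∈ D m s ↔ (∑ i, t i = s) ∧ ∀ i j : Fin m, i ≤ j → t j ≤ t i := by
  simp [D, Finset.Nat.mem_antidiagonalTuple]

/-- Sum of `binomProd` over decreasing tuples of length `m+1` summing to `s`
with first entry `k`. -/
def Fsum (m s k : ℕ) : ℕ :=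
  ∑ t ∈ (D (m+1) s).filter (fun t => t 0 = k), binomProd (m+1) t

lemma Fsum_zero (m k : ℕ) : Fsum m 0 k = if k = 0 then 1 else 0 := by
  have h : (D (m+1) 0).filter (fun t => t 0 = k)
      = if k = 0 then {(fun _ => 0 : Fin (m+1) → ℕ)} else ∅ := by
    ext t
    simp only [mem_filter, mem_D]
    constructor
    · rintro ⟨⟨hs, _⟩, h0⟩
      have ht : ∀ i, t i = 0 := by
        intro i
        exact Finset.sum_eq_zero_iff.mp hs i (mem_univ i)
      have : k = 0 := by rw [← h0, ht]
      simp [this, funext ht]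
    · intro ht
      by_cases hk : k = 0
      · simp only [hk, if_pos] at ht
        simp only [mem_singleton] at ht
        subst ht hk
        simp
      · simp [hk] at ht
  rw [Fsum, h]
  by_cases hk : k = 0 <;> simp [hk, binomProd]

lemma Fsum_eq_zero_of_lt (m s k : ℕ) (h : s < k) : Fsum m s k = 0 := by
  rw [Fsum]
  apply Finset.sum_eq_zero
  intro t ht
  simp only [mem_filter, mem_D] at ht
  obtain ⟨⟨hs, _⟩, h0⟩ := ht
  exact absurd (hs ▸ h0 ▸ Finset.single_le_sum (f := t) (fun i _ => Nat.zero_le _) (mem_univ 0))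
    (by omega)

lemma Fsum_zero_k (m s : ℕ) (hs : 0 < s) : Fsum m s 0 = 0 := by
  rw [Fsum]
  apply Finset.sum_eq_zero
  intro t ht
  simp only [mem_filter, mem_D] at ht
  obtain ⟨⟨hs', hdec⟩, h0⟩ := ht
  have : ∀ i, t i = 0 := fun i => Nat.le_zero.mp (h0 ▸ hdec 0 i (Fin.zero_le i))
  simp [Finset.sum_congr rfl (fun i _ => this i)] at hs'
  omega

lemma binomProd_succ (m : ℕ) (t : Fin (m+2) → ℕ) :
    binomProd (m+2) t = Nat.choose (t 0) (t 1) * binomProd (m+1) (t ∘ Fin.succ) := by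
  rw [binomProd, Fin.prod_univ_succ, binomProd]
  congr 1
  · apply Finset.prod_congr rfl
    intro i _
    have h1 : ((i.succ : ℕ)) = (i : ℕ) + 1 := rfl
    by_cases h : (i : ℕ) + 1 < m + 1
    · rw [dif_pos (by omega : ((i.succ : ℕ)) + 1 < m+2), dif_pos h]
      congr 1
    · rw [dif_neg (by omega : ¬ ((i.succ : ℕ)) + 1 < m+2), dif_neg h]
      rfl

lemma Fsum_rec (m r k : ℕ) :
    Fsum (m+1) (k+r) k = ∑ j ∈ range (k+1), Nat.choose k j * Fsum m r j := by
  rw [Fsum]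
  rw [← Finset.sum_fiberwise_of_maps_to (t := range (k+1)) (g := fun t => t 1)
    (fun t ht => by
      simp only [mem_filter, mem_D] at ht
      exact mem_range.mpr (Nat.lt_succ_of_le (ht.2 ▸ ht.1.2 0 1 (by simp [Fin.le_def]))))]
  apply Finset.sum_congr rfl
  intro j hj
  rw [Fsum, Finset.mul_sum]
  apply Finset.sum_nbij' (i := fun t => t ∘ Fin.succ) (j := fun u => Fin.cons k u)
  · intro t ht
    simp only [mem_filter, mem_D] at ht ⊢
    obtain ⟨⟨⟨hsum, hdec⟩, h0⟩, h1⟩ := ht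
    refine ⟨⟨?_, ?_⟩, h1⟩
    · have := Fin.sum_univ_succ t
      rw [h0] at this
      have h2 : (k + r) = k + ∑ i : Fin (m+1), t i.succ := by rw [← hsum, this]
      have h3 : ∑ i : Fin (m+1), (t ∘ Fin.succ) i = ∑ i : Fin (m+1), t i.succ := rfl
      omega
    · intro a b hab
      exact hdec a.succ b.succ (Fin.succ_le_succ_iff.mpr hab)
  · intro u hu
    simp only [mem_filter, mem_D] at hu ⊢
    obtain ⟨⟨hsum, hdec⟩, h0⟩ := hu
    have hjk : j ≤ k := Nat.lt_succ_iff.mp (mem_range.mp hj)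
    refine ⟨⟨⟨?_, ?_⟩, by simp⟩, by simp [h0]⟩
    · rw [Fin.sum_cons, hsum]
    · intro a b hab
      induction b using Fin.cases with
      | zero =>
        have : a = 0 := le_antisymm hab (Fin.zero_le a)
        simp [this]
      | succ b =>
        induction a using Fin.cases with
        | zero =>
          simp only [Fin.cons_zero, Fin.cons_succ]
          calc u b ≤ u 0 := hdec 0 b (Fin.zero_le b)
          _ = j := h0
          _ ≤ k := hjk
        | succ a =>
          simp only [Fin.cons_succ]
          exact hdec a b (by rwa [Fin.succ_le_succ_iff] at hab)
  · intro t ht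
    simp only [mem_filter, mem_D] at ht
    funext i
    induction i using Fin.cases with
    | zero => simp [ht.1.2]
    | succ i => simp
  · intro u _
    funext i
    simp
  · intro t ht
    simp only [mem_filter, mem_D] at ht
    rw [binomProd_succ, ht.1.2, ht.2]

lemma Fcount : ∀ m s k, 1 ≤ k → k ≤ s → s ≤ m + 1 → Fsum m s k = (s-1).choose (k-1) := by
  intro m
  induction m with
  | zero =>
    intro s k h1 h2 h3
    have hs : s = 1 := by omega
    have hk : k = 1 := by omega
    subst hs hk
    decide
  | succ m ih =>
    intro s k h1 h2 h3
    obtain ⟨r, rfl⟩ : ∃ r, s = k + r := ⟨s - k, by omega⟩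
    rw [Fsum_rec]
    rcases Nat.eq_zero_or_pos r with hr | hr
    · subst hr
      rw [Finset.sum_eq_single 0]
      · simp [Fsum_zero, Nat.choose_self]
      · intro j _ hj
        simp [Fsum_zero, hj]
      · simp
    · have key : ∀ j ∈ range k, k.choose (j+1) * Fsum m r (j+1)
          = k.choose (j+1) * (r-1).choose j := by
        intro j hj
        by_cases hjr : j + 1 ≤ r
        · rw [ih r (j+1) (by omega) hjr (by omega)]
          norm_num
        · rw [Fsum_eq_zero_of_lt m r (j+1) (by omega),
            Nat.choose_eq_zero_of_lt (by omega : r - 1 < j)]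
      rw [Finset.sum_range_succ', Fsum_zero_k m r hr, Finset.sum_congr rfl key]
      have hvand : (k + r - 1).choose (k-1)
          = ∑ a ∈ range k, k.choose a * (r-1).choose (k-1-a) := by
        rw [show k + r - 1 = k + (r-1) by omega, Nat.add_choose_eq,
          Nat.sum_antidiagonal_eq_sum_range_succ_mk, show (k-1).succ = k by omega]
      rw [hvand, ← Finset.sum_range_reflect]
      simp only [mul_zero, add_zero]
      apply Finset.sum_congr rfl
      intro j hj
      have hjk : j < k := mem_range.mp hj
      rw [show k-1-j+1 = k-j by omega, Nat.choose_symm (le_of_lt hjk)]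

lemma odd_sum_choose (n : ℕ) (hn : 1 ≤ n) :
    ∑ k ∈ range (n+1), (if Odd k then (n.choose k : ℚ) else 0) = 2^(n-1) := by
  have h1 : ∑ k ∈ range (n+1), (n.choose k : ℚ) = 2^n := by
    have h := Nat.sum_range_choose n
    have := congrArg (fun z : ℕ => (z : ℚ)) h
    push_cast at this
    exact this
  have h2 : ∑ k ∈ range (n+1), (-1 : ℚ)^k * n.choose k = 0 := by
    have := Int.alternating_sum_range_choose_of_ne (Nat.one_le_iff_ne_zero.mp hn)
    have := congrArg (fun z : ℤ => (z : ℚ)) this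
    push_cast at this
    simpa using this
  have h3 : ∀ k, (-1 : ℚ)^k * n.choose k
      = (n.choose k : ℚ) - 2 * (if Odd k then (n.choose k : ℚ) else 0) := by
    intro k
    rcases Nat.even_or_odd k with h | h
    · simp [h, Nat.not_odd_iff_even.mpr h, h.neg_one_pow]
    · simp [h, h.neg_one_pow]
      ring
  rw [Finset.sum_congr rfl (fun k _ => h3 k), Finset.sum_sub_distrib, h1, ← Finset.mul_sum] at h2
  have h4 : (2:ℚ)^(n-1) * 2 = 2^n := by
    rw [← pow_succ]
    congr 1
    omega
  linarith

theorem stmt5 (n : ℕ) (hn : 1 < n) :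
    ∑ t ∈ (partitionTuples n).filter (fun t => Odd (t ⟨0, Nat.zero_lt_of_lt hn⟩)),
      (binomProd n t : ℚ) * ((n : ℚ) / (t ⟨0, Nat.zero_lt_of_lt hn⟩ : ℚ))
      = 2 ^ (n - 1) := by
  obtain ⟨m, rfl⟩ : ∃ m, n = m + 2 := ⟨n - 2, by omega⟩
  have hP : partitionTuples (m+2) = D (m+2) (m+2) := rfl
  have hz : (⟨0, Nat.zero_lt_of_lt hn⟩ : Fin (m+2)) = 0 := rfl
  rw [hP]
  simp only [hz]
  rw [← Finset.sum_fiberwise_of_maps_to (t := range (m+2+1)) (g := fun t => t 0)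
    (fun t ht => by
      simp only [mem_filter, mem_D] at ht
      have h := Finset.single_le_sum (f := t) (fun i _ => Nat.zero_le _) (mem_univ 0)
      rw [ht.1.1] at h
      exact mem_range.mpr (Nat.lt_succ_of_le h))]
  rw [show (2:ℚ)^(m+2-1) = 2^(m+2-1) from rfl, ← odd_sum_choose (m+2) (by omega)]
  apply Finset.sum_congr rfl
  intro k hk
  by_cases hko : Odd k
  · rw [if_pos hko]
    have h1 : ((D (m+2) (m+2)).filter (fun t => Odd (t 0))).filter (fun t => t 0 = k)
        = (D (m+2) (m+2)).filter (fun t => t 0 = k) := by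
      ext t
      simp only [mem_filter]
      constructor
      · rintro ⟨⟨h, _⟩, h2⟩; exact ⟨h, h2⟩
      · rintro ⟨h, h2⟩; exact ⟨⟨h, h2 ▸ hko⟩, h2⟩
    rw [h1]
    have h2 : ∀ t ∈ (D (m+2) (m+2)).filter (fun t => t 0 = k),
        (binomProd (m+2) t : ℚ) * (((m+2 : ℕ) : ℚ) / (t 0 : ℚ))
        = (binomProd (m+2) t : ℚ) * (((m+2 : ℕ) : ℚ) / (k : ℚ)) := by
      intro t ht
      rw [(mem_filter.mp ht).2]
    rw [Finset.sum_congr rfl h2, ← Finset.sum_mul]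
    have h3 : ∑ t ∈ (D (m+2) (m+2)).filter (fun t => t 0 = k), (binomProd (m+2) t : ℚ)
        = (Fsum (m+1) (m+2) k : ℚ) := by
      rw [Fsum]
      push_cast
      rfl
    rw [h3, Fcount (m+1) (m+2) k hko.pos (Nat.lt_succ_iff.mp (mem_range.mp hk)) (by omega)]
    -- now: (C(m+1, k-1) : ℚ) * ((m+2)/k) = C(m+2, k)
    have hk1 : 1 ≤ k := hko.pos
    obtain ⟨k', rfl⟩ : ∃ k', k = k' + 1 := ⟨k - 1, by omega⟩
    have hid := Nat.add_one_mul_choose_eq (m+1) k'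
    have hid' := congrArg (fun z : ℕ => (z : ℚ)) hid
    push_cast at hid'
    have hk0 : ((k' : ℚ) + 1) ≠ 0 := by positivity
    field_simp
    rw [show m + 2 - 1 = m + 1 by omega, Nat.add_sub_cancel]
    rw [show m + 1 + 1 = m + 2 by omega] at hid'
    push_cast
    linarith [hid']
  · rw [if_neg hko]
    apply Finset.sum_eq_zero
    intro t ht
    simp only [mem_filter] at ht
    exact absurd (ht.2 ▸ ht.1.2) hko
end

section
/- For every integer n > 0, the sum over all weakly decreasing tuples (λ₁, λ₂, ..., λₙ) of nonnegative integers with λ₁ + λ₂ + ... + λₙ = n of the rational quantity (−1)^(1+λ₁) · C(λ₁,λ₂)·C(λ₂,λ₃)···C(λₙ,0) · (n/λ₁) · ∏_{i=1}^{n} ((2i−1)/i)^{λᵢ} equals 2^(n-1). -/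
open Finset

noncomputable section StmtAux

open PowerSeries

def wq (m : ℕ) : ℚ := (2 * m - 1) / m
def aq (k : ℕ) : ℚ := Nat.centralBinom k / 2 ^ k
def headT (d : ℕ) (t : Fin d → ℕ) : ℕ := if h : 0 < d then t ⟨0, h⟩ else 0

def V : ℕ → ℕ → PowerSeries ℚ
  | 0, _ => 0
  | d + 1, m => PowerSeries.C (wq (m + 1)) * PowerSeries.X * (1 + V d (m + 1))

def Bq : PowerSeries ℚ := PowerSeries.mk fun r => if r = 0 then 0 else aq r
def Aq : PowerSeries ℚ := 1 + Bq
def Gq : PowerSeries ℚ := PowerSeries.mk fun r => (2 : ℚ) ^ r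

lemma sum_adt_succ {M : Type*} [AddCommMonoid M] (d s : ℕ) (F : (Fin (d + 1) → ℕ) → M) :
    ∑ t ∈ Finset.Nat.antidiagonalTuple (d + 1) s, F t
      = ∑ p ∈ Finset.HasAntidiagonal.antidiagonal s, ∑ u ∈ Finset.Nat.antidiagonalTuple d p.2,
          F (Fin.cons p.1 u) := by
  rw [Finset.sum_sigma']
  refine Finset.sum_bij' (fun t _ => (⟨(t 0, ∑ i, Fin.tail t i), Fin.tail t⟩ :
      (p : ℕ × ℕ) × (Fin d → ℕ))) (fun x _ => Fin.cons x.1.1 x.2) ?_ ?_ ?_ ?_ ?_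
  · intro t ht
    rw [Finset.Nat.mem_antidiagonalTuple] at ht
    rw [Finset.mem_sigma, Finset.HasAntidiagonal.mem_antidiagonal, Finset.Nat.mem_antidiagonalTuple]
    refine ⟨?_, rfl⟩
    show t 0 + ∑ i, Fin.tail t i = s
    rw [← ht, Fin.sum_univ_succ]
    rfl
  · intro x hx
    rw [Finset.mem_sigma, Finset.HasAntidiagonal.mem_antidiagonal, Finset.Nat.mem_antidiagonalTuple] at hx
    rw [Finset.Nat.mem_antidiagonalTuple, Fin.sum_cons, hx.2, hx.1]
  · intro t _
    exact Fin.cons_self_tail t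
  · intro x hx
    rw [Finset.mem_sigma, Finset.HasAntidiagonal.mem_antidiagonal, Finset.Nat.mem_antidiagonalTuple] at hx
    refine Sigma.ext ?_ (by simp [Fin.tail_cons])
    simp [Fin.tail_cons, hx.2]
  · intro t _
    rw [Fin.cons_self_tail]

lemma fin_cons_mk_succ {d : ℕ} (j : ℕ) (u : Fin d → ℕ) (a : ℕ) (h : a + 1 < d + 1) :
    Fin.cons (α := fun _ => ℕ) j u ⟨a + 1, h⟩ = u ⟨a, Nat.lt_of_succ_lt_succ h⟩ :=
  rfl

lemma binomProd_cons (d j : ℕ) (u : Fin d → ℕ) :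
    binomProd (d + 1) (Fin.cons j u) = Nat.choose j (headT d u) * binomProd d u := by
  unfold binomProd
  rw [Fin.prod_univ_succ]
  congr 1
  · simp only [Fin.cons_zero, Fin.val_zero]
    rcases Nat.eq_zero_or_pos d with hd | hd
    · subst hd
      rw [dif_neg (by norm_num)]
      unfold headT
      rw [dif_neg (by omega)]
    · simp only [show 0 + 1 < d + 1 by omega, ↓reduceDIte]
      unfold headT
      rw [dif_pos hd, fin_cons_mk_succ]
  · refine Finset.prod_congr rfl fun i _ => ?_
    simp only [Fin.cons_succ, Fin.val_succ]
    by_cases h : (i : ℕ) + 1 < d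
    · rw [dif_pos (by omega : (i:ℕ) + 1 + 1 < d + 1), dif_pos h, fin_cons_mk_succ]
    · rw [dif_neg (by omega), dif_neg h]

lemma coeff_pow_one_add_V :
    ∀ (d m k s : ℕ), (PowerSeries.coeff s) ((1 + V d m) ^ k)
      = ∑ t ∈ Finset.Nat.antidiagonalTuple d s,
          (Nat.choose k (headT d t) : ℚ) * (binomProd d t : ℚ)
            * ∏ i : Fin d, wq (m + 1 + i) ^ t i := by
  intro d
  induction d with
  | zero =>
    intro m k s
    show (PowerSeries.coeff s) ((1 + (0 : PowerSeries ℚ)) ^ k) = _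
    rw [add_zero, one_pow, PowerSeries.coeff_one]
    cases s with
    | zero => simp [headT, binomProd]
    | succ s => simp
  | succ d ih =>
    intro m k s
    have hVpow : ∀ j : ℕ, (V (d + 1) m) ^ j
        = PowerSeries.C (wq (m + 1) ^ j) * (PowerSeries.X ^ j * (1 + V d (m + 1)) ^ j) := by
      intro j
      show (PowerSeries.C (wq (m + 1)) * PowerSeries.X * (1 + V d (m + 1))) ^ j = _
      rw [mul_pow, mul_pow, ← map_pow, mul_assoc]
    have hcoeffX : ∀ (j : ℕ) (f : PowerSeries ℚ), (PowerSeries.coeff s) (PowerSeries.X ^ j * f)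
        = if j ≤ s then PowerSeries.coeff (s - j) f else 0 := by
      intro j f
      split_ifs with h
      · obtain ⟨r, rfl⟩ : ∃ r, s = r + j := ⟨s - j, (Nat.sub_add_cancel h).symm⟩
        rw [PowerSeries.coeff_X_pow_mul, Nat.add_sub_cancel]
      · exact PowerSeries.X_pow_dvd_iff.mp (dvd_mul_right _ _) s (by omega)
    have hL : (PowerSeries.coeff s) ((1 + V (d + 1) m) ^ k)
        = ∑ j ∈ Finset.range (k + 1), (Nat.choose k j : ℚ) * wq (m + 1) ^ j
            * (if j ≤ s then PowerSeries.coeff (s - j) ((1 + V d (m + 1)) ^ j) else 0) := by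
      rw [add_comm (1 : PowerSeries ℚ), add_pow, map_sum]
      refine Finset.sum_congr rfl fun j _ => ?_
      rw [one_pow, mul_one, hVpow j,
        show ((Nat.choose k j : ℕ) : PowerSeries ℚ) = PowerSeries.C ((Nat.choose k j : ℚ))
          from (map_natCast (PowerSeries.C (R := ℚ)) _).symm,
        mul_comm, ← mul_assoc, ← map_mul, PowerSeries.coeff_C_mul, hcoeffX, mul_assoc]
    rw [hL, sum_adt_succ, Finset.Nat.sum_antidiagonal_eq_sum_range_succ_mk]
    have hR : ∀ j : ℕ, ∑ u ∈ Finset.Nat.antidiagonalTuple d (s - j),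
          (Nat.choose k (headT (d + 1) (Fin.cons j u)) : ℚ)
            * (binomProd (d + 1) (Fin.cons j u) : ℚ)
            * ∏ i : Fin (d + 1), wq (m + 1 + i) ^ (Fin.cons j u i)
        = (Nat.choose k j : ℚ) * wq (m + 1) ^ j
            * PowerSeries.coeff (s - j) ((1 + V d (m + 1)) ^ j) := by
      intro j
      rw [ih (m + 1) j (s - j), Finset.mul_sum]
      refine Finset.sum_congr rfl fun u _ => ?_
      have h1 : headT (d + 1) (Fin.cons j u) = j := by
        unfold headT
        rw [dif_pos (by omega)]
        simp
      have h3 : ∏ i : Fin (d + 1), wq (m + 1 + i) ^ (Fin.cons j u i)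
          = wq (m + 1) ^ j * ∏ i : Fin d, wq (m + 1 + 1 + i) ^ u i := by
        rw [Fin.prod_univ_succ]
        simp only [Fin.cons_zero, Fin.cons_succ, Fin.val_zero, Fin.val_succ, add_zero]
        exact congrArg _ (Finset.prod_congr rfl fun i _ => by
          rw [show m + 1 + ((i : ℕ) + 1) = m + 1 + 1 + (i : ℕ) by omega])
      rw [h1, binomProd_cons, h3]
      push_cast
      ring
    have hRR : ∑ j ∈ Finset.range (s + 1), ∑ u ∈ Finset.Nat.antidiagonalTuple d ((j, s - j).2),
          (Nat.choose k (headT (d + 1) (Fin.cons (j, s - j).1 u)) : ℚ)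
            * (binomProd (d + 1) (Fin.cons (j, s - j).1 u) : ℚ)
            * ∏ i : Fin (d + 1), wq (m + 1 + i) ^ (Fin.cons (j, s - j).1 u i)
        = ∑ j ∈ Finset.range (s + 1), (Nat.choose k j : ℚ) * wq (m + 1) ^ j
            * PowerSeries.coeff (s - j) ((1 + V d (m + 1)) ^ j) :=
      Finset.sum_congr rfl fun j _ => hR j
    rw [hRR]
    set g : ℕ → ℚ := fun j => (Nat.choose k j : ℚ) * wq (m + 1) ^ j
        * PowerSeries.coeff (s - j) ((1 + V d (m + 1)) ^ j) with hg
    have hg0 : ∀ j, k < j → g j = 0 := fun j hj => by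
      simp [hg, Nat.choose_eq_zero_of_lt hj]
    have hfg : ∀ j : ℕ, (Nat.choose k j : ℚ) * wq (m + 1) ^ j *
          (if j ≤ s then PowerSeries.coeff (s - j) ((1 + V d (m + 1)) ^ j) else 0)
        = if j ≤ s then g j else 0 := fun j => by
      rw [mul_ite, mul_zero]
    calc ∑ j ∈ Finset.range (k + 1), ((Nat.choose k j : ℚ) * wq (m + 1) ^ j *
          (if j ≤ s then PowerSeries.coeff (s - j) ((1 + V d (m + 1)) ^ j) else 0))
        = ∑ j ∈ Finset.range (k + 1), (if j ≤ s then g j else 0) :=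
          Finset.sum_congr rfl fun j _ => hfg j
      _ = ∑ j ∈ Finset.range (k + s + 2), (if j ≤ s then g j else 0) :=
          Finset.sum_subset (Finset.range_subset_range.mpr (by omega)) (fun x _ hnx => by
            have hkx : k < x := by simp only [Finset.mem_range] at hnx; omega
            by_cases hxs : x ≤ s <;> simp [hxs, hg0 x hkx])
      _ = ∑ j ∈ Finset.range (s + 1), (if j ≤ s then g j else 0) :=
          (Finset.sum_subset (Finset.range_subset_range.mpr (by omega)) (fun x _ hnx => by
            have hsx : s < x := by simp only [Finset.mem_range] at hnx; omega
            rw [if_neg (by omega)])).symm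
      _ = ∑ j ∈ Finset.range (s + 1), g j :=
          Finset.sum_congr rfl fun j hj =>
            if_pos (by simp only [Finset.mem_range] at hj; omega)

lemma coeff_one_add_V : ∀ (d m r : ℕ), (PowerSeries.coeff r) (1 + V d m)
    = if r ≤ d then ∏ i ∈ Finset.range r, wq (m + 1 + i) else 0 := by
  intro d
  induction d with
  | zero =>
    intro m r
    show (PowerSeries.coeff r) (1 + (0 : PowerSeries ℚ)) = _
    rw [add_zero, PowerSeries.coeff_one]
    cases r with
    | zero => simp
    | succ r => simp
  | succ d ih =>
    intro m r
    show (PowerSeries.coeff r)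
        (1 + PowerSeries.C (wq (m + 1)) * PowerSeries.X * (1 + V d (m + 1))) = _
    rw [map_add, PowerSeries.coeff_one, mul_assoc, PowerSeries.coeff_C_mul]
    cases r with
    | zero => simp
    | succ r =>
      rw [PowerSeries.coeff_succ_X_mul, ih (m + 1) r]
      simp only [Nat.succ_le_succ_iff, if_true, Nat.add_eq, Nat.succ_ne_zero, if_false, zero_add]
      split_ifs with h
      · rw [Finset.prod_range_succ']
        rw [show wq (m + 1 + 0) = wq (m + 1) by norm_num]
        rw [mul_comm]
        congr 1
        exact Finset.prod_congr rfl fun i _ => by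
          rw [show m + 1 + (i + 1) = m + 1 + 1 + i by omega]
      · rw [mul_zero]

lemma aq_rec (r : ℕ) : ((r : ℚ) + 1) * aq (r + 1) = (2 * r + 1) * aq r := by
  have h := Nat.succ_mul_centralBinom_succ r
  have hq : ((r : ℚ) + 1) * (Nat.centralBinom (r + 1) : ℚ)
      = 2 * (2 * r + 1) * (Nat.centralBinom r : ℚ) := by exact_mod_cast h
  have h2 : (2 : ℚ) ^ r ≠ 0 := by positivity
  calc ((r : ℚ) + 1) * aq (r + 1)
      = (((r : ℚ) + 1) * (Nat.centralBinom (r + 1) : ℚ)) / 2 ^ (r + 1) := by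
        unfold aq; ring
    _ = (2 * (2 * r + 1) * (Nat.centralBinom r : ℚ)) / (2 ^ r * 2) := by
        rw [hq, pow_succ]
    _ = (2 * r + 1) * aq r := by unfold aq; field_simp

lemma aq_zero : aq 0 = 1 := by simp [aq]

lemma aq_eq_prod (r : ℕ) : aq r = ∏ i ∈ Finset.range r, wq (1 + i) := by
  induction r with
  | zero => simp [aq_zero]
  | succ r ih =>
    rw [Finset.prod_range_succ, ← ih]
    have h := aq_rec r
    have hr : ((r : ℚ) + 1) ≠ 0 := by positivity
    rw [show wq (1 + r) = (2 * (r : ℚ) + 1) / ((r : ℚ) + 1) by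
      unfold wq; push_cast; congr 1 <;> ring]
    field_simp
    linear_combination h

lemma two_eq_C : (2 : PowerSeries ℚ) = PowerSeries.C 2 := (map_ofNat (PowerSeries.C (R := ℚ)) 2).symm

lemma coeff_Aq (r : ℕ) : (PowerSeries.coeff r) Aq = aq r := by
  unfold Aq Bq
  rw [map_add, PowerSeries.coeff_one, PowerSeries.coeff_mk]
  cases r with
  | zero => simp [aq_zero]
  | succ r => simp

lemma ode_Aq : (1 - 2 * PowerSeries.X) * (d⁄dX ℚ Aq) = Aq := by
  ext r
  rw [sub_mul, one_mul, map_sub, coeff_Aq]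
  rw [show (2 : PowerSeries ℚ) * PowerSeries.X * (d⁄dX ℚ Aq)
      = PowerSeries.C 2 * (PowerSeries.X * d⁄dX ℚ Aq) by
    rw [mul_assoc, two_eq_C]]
  rw [PowerSeries.coeff_C_mul]
  cases r with
  | zero =>
    rw [PowerSeries.coeff_derivative, coeff_Aq]
    simp only [PowerSeries.coeff_zero_eq_constantCoeff]
    rw [show (PowerSeries.constantCoeff (R := ℚ)) (PowerSeries.X * d⁄dX ℚ Aq) = 0 by simp]
    have := aq_rec 0
    push_cast at this ⊢
    linarith
  | succ r =>
    rw [PowerSeries.coeff_succ_X_mul, PowerSeries.coeff_derivative,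
      PowerSeries.coeff_derivative, coeff_Aq, coeff_Aq]
    have h1 := aq_rec (r + 1)
    have h2 := aq_rec r
    push_cast at h1 h2 ⊢
    linarith

lemma geo_Gq : (1 - 2 * PowerSeries.X) * Gq = 1 := by
  ext r
  rw [sub_mul, one_mul, map_sub]
  rw [show (2 : PowerSeries ℚ) * PowerSeries.X * Gq
      = PowerSeries.C 2 * (PowerSeries.X * Gq) by rw [mul_assoc, two_eq_C]]
  rw [PowerSeries.coeff_C_mul]
  cases r with
  | zero => simp [Gq]
  | succ r =>
    rw [PowerSeries.coeff_succ_X_mul]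
    simp [Gq, PowerSeries.coeff_one, pow_succ]
    ring

lemma deriv_one_sub_two_X : d⁄dX ℚ (1 - 2 * PowerSeries.X) = -2 := by
  rw [map_sub]
  rw [two_eq_C, Derivation.leibniz, PowerSeries.derivative_X, PowerSeries.derivative_C]
  simp

lemma sq_Aq : Aq * Aq = Gq := by
  have hD : d⁄dX ℚ ((1 - 2 * PowerSeries.X) * (Aq * Aq)) = 0 := by
    rw [Derivation.leibniz, Derivation.leibniz, deriv_one_sub_two_X]
    simp only [smul_eq_mul]
    linear_combination (2 * Aq) * ode_Aq
  have h1 : (1 - 2 * PowerSeries.X) * (Aq * Aq) = 1 := by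
    refine PowerSeries.derivative.ext (hD.trans (by simp)) ?_
    rw [map_mul, map_mul, map_sub]
    have hA : (PowerSeries.constantCoeff (R := ℚ)) Aq = 1 := by
      rw [← PowerSeries.coeff_zero_eq_constantCoeff, coeff_Aq, aq_zero]
    rw [hA, two_eq_C]
    simp
  calc Aq * Aq = (Aq * Aq) * ((1 - 2 * PowerSeries.X) * Gq) := by rw [geo_Gq, mul_one]
    _ = ((1 - 2 * PowerSeries.X) * (Aq * Aq)) * Gq := by ring
    _ = Gq := by rw [h1, one_mul]

lemma unit_Aq : (1 - 2 * PowerSeries.X) * (Aq * Aq) = 1 := by rw [sq_Aq]; exact geo_Gq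

lemma dAq_eq_dBq : d⁄dX ℚ Aq = d⁄dX ℚ Bq := by
  unfold Aq; rw [map_add]; simp

lemma X_dvd_Bq : PowerSeries.X ∣ Bq := by
  rw [PowerSeries.X_dvd_iff, ← PowerSeries.coeff_zero_eq_constantCoeff]
  simp [Bq]

lemma part2 (M : ℕ) :
    ∑ j ∈ Finset.range (M + 2), (-1 : ℚ) ^ (1 + j) * (((M : ℚ) + 1) / (j : ℕ))
        * PowerSeries.coeff (M + 1) (Bq ^ j) = 2 ^ M := by
  rw [Finset.sum_range_succ']
  have h0 : (-1 : ℚ) ^ (1 + 0) * (((M : ℚ) + 1) / ((0 : ℕ) : ℚ))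
      * PowerSeries.coeff (M + 1) (Bq ^ 0) = 0 := by norm_num
  rw [h0, add_zero]
  have hterm : ∀ i : ℕ, (-1 : ℚ) ^ (1 + (i + 1)) * (((M : ℚ) + 1) / ((i + 1 : ℕ) : ℚ))
      * PowerSeries.coeff (M + 1) (Bq ^ (i + 1))
      = (PowerSeries.coeff M) ((-Bq) ^ i * d⁄dX ℚ Bq) := by
    intro i
    have hD : PowerSeries.coeff M (d⁄dX ℚ (Bq ^ (i + 1)))
        = PowerSeries.coeff (M + 1) (Bq ^ (i + 1)) * ((M : ℚ) + 1) := by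
      rw [PowerSeries.coeff_derivative]
    have hL : d⁄dX ℚ (Bq ^ (i + 1)) = (i + 1) • Bq ^ i • d⁄dX ℚ Bq := by
      rw [Derivation.leibniz_pow]
      rw [show i + 1 - 1 = i from rfl]
    have key : ((i : ℚ) + 1) * PowerSeries.coeff M (Bq ^ i * d⁄dX ℚ Bq)
        = PowerSeries.coeff (M + 1) (Bq ^ (i + 1)) * ((M : ℚ) + 1) := by
      rw [← hD, hL, map_nsmul, smul_eq_mul, nsmul_eq_mul]
      push_cast
      ring
    have hneg : (PowerSeries.coeff M) ((-Bq) ^ i * d⁄dX ℚ Bq)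
        = (-1 : ℚ) ^ i * PowerSeries.coeff M (Bq ^ i * d⁄dX ℚ Bq) := by
      rw [neg_pow, mul_assoc,
        show ((-1 : PowerSeries ℚ)) ^ i = PowerSeries.C ((-1 : ℚ) ^ i) by
          rw [map_pow, map_neg, map_one],
        PowerSeries.coeff_C_mul]
    rw [hneg]
    have hi : ((i : ℚ) + 1) ≠ 0 := by positivity
    rw [show 1 + (i + 1) = i + 2 by omega, pow_add]
    push_cast
    field_simp
    linear_combination (-1 : ℚ) * key
  rw [Finset.sum_congr rfl fun i _ => hterm i]
  rw [show ∑ i ∈ Finset.range (M + 1), (PowerSeries.coeff M) ((-Bq) ^ i * d⁄dX ℚ Bq)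
      = (PowerSeries.coeff M) ((∑ i ∈ Finset.range (M + 1), (-Bq) ^ i) * d⁄dX ℚ Bq) by
    rw [Finset.sum_mul, map_sum]]
  set S : PowerSeries ℚ := ∑ i ∈ Finset.range (M + 1), (-Bq) ^ i with hS
  have hgeom : (1 + Bq) * S = 1 - (-Bq) ^ (M + 1) := by
    have h := geom_sum_mul (-Bq) (M + 1)
    linear_combination -h
  have step1 : S * d⁄dX ℚ Bq
      = ((1 + Bq) * S) * (d⁄dX ℚ Bq * ((1 - 2 * PowerSeries.X) * Aq)) := by
    calc S * d⁄dX ℚ Bq = (S * d⁄dX ℚ Bq) * ((1 - 2 * PowerSeries.X) * (Aq * Aq)) := by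
          rw [unit_Aq, mul_one]
      _ = ((1 + Bq) * S) * (d⁄dX ℚ Bq * ((1 - 2 * PowerSeries.X) * Aq)) := by
          unfold Aq; ring
  rw [step1, hgeom, sub_mul, one_mul, map_sub]
  have hzero : (PowerSeries.coeff M)
      ((-Bq) ^ (M + 1) * (d⁄dX ℚ Bq * ((1 - 2 * PowerSeries.X) * Aq))) = 0 := by
    have hdvd : PowerSeries.X ^ (M + 1)
        ∣ (-Bq) ^ (M + 1) * (d⁄dX ℚ Bq * ((1 - 2 * PowerSeries.X) * Aq)) :=
      dvd_mul_of_dvd_left (pow_dvd_pow_of_dvd ((dvd_neg).mpr X_dvd_Bq) _) _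
    exact PowerSeries.X_pow_dvd_iff.mp hdvd M (by omega)
  rw [hzero, sub_zero]
  have hfin : d⁄dX ℚ Bq * ((1 - 2 * PowerSeries.X) * Aq) = Gq := by
    calc d⁄dX ℚ Bq * ((1 - 2 * PowerSeries.X) * Aq)
        = ((1 - 2 * PowerSeries.X) * d⁄dX ℚ Aq) * Aq := by rw [dAq_eq_dBq]; ring
      _ = Aq * Aq := by rw [ode_Aq]
      _ = Gq := sq_Aq
  rw [hfin]
  simp [Gq]

lemma V_pow (d m j : ℕ) : (V (d + 1) m) ^ j
    = PowerSeries.C (wq (m + 1) ^ j) * (PowerSeries.X ^ j * (1 + V d (m + 1)) ^ j) := by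
  show (PowerSeries.C (wq (m + 1)) * PowerSeries.X * (1 + V d (m + 1))) ^ j = _
  rw [mul_pow, mul_pow, ← map_pow, mul_assoc]

lemma coeff_X_pow_mul_ite (s j : ℕ) (f : PowerSeries ℚ) :
    (PowerSeries.coeff s) (PowerSeries.X ^ j * f)
      = if j ≤ s then PowerSeries.coeff (s - j) f else 0 := by
  split_ifs with h
  · obtain ⟨r, rfl⟩ : ∃ r, s = r + j := ⟨s - j, (Nat.sub_add_cancel h).symm⟩
    rw [PowerSeries.coeff_X_pow_mul, Nat.add_sub_cancel]
  · exact PowerSeries.X_pow_dvd_iff.mp (dvd_mul_right _ _) s (by omega)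

lemma coeff_pow_eq_of_agree (f g : PowerSeries ℚ) (N : ℕ)
    (h : ∀ r, r ≤ N → PowerSeries.coeff r f = PowerSeries.coeff r g) :
    ∀ (k r : ℕ), r ≤ N → PowerSeries.coeff r (f ^ k) = PowerSeries.coeff r (g ^ k) := by
  intro k
  induction k with
  | zero => intro r _; rw [pow_zero, pow_zero]
  | succ k ih =>
    intro r hr
    rw [pow_succ, pow_succ, PowerSeries.coeff_mul, PowerSeries.coeff_mul]
    refine Finset.sum_congr rfl fun p hp => ?_
    rw [Finset.HasAntidiagonal.mem_antidiagonal] at hp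
    rw [ih p.1 (by omega), h p.2 (by omega)]

lemma antitone_of_binomProd_ne_zero {n : ℕ} {t : Fin n → ℕ} (h : binomProd n t ≠ 0) :
    ∀ i j : Fin n, i ≤ j → t j ≤ t i := by
  have hfac : ∀ (a : ℕ) (ha : a + 1 < n), t ⟨a + 1, ha⟩ ≤ t ⟨a, by omega⟩ := by
    intro a ha
    have hne := Finset.prod_ne_zero_iff.mp h ⟨a, by omega⟩ (Finset.mem_univ _)
    rw [dif_pos (show ((⟨a, by omega⟩ : Fin n) : ℕ) + 1 < n from ha)] at hne
    have hne' : Nat.choose (t ⟨a, by omega⟩) (t ⟨a + 1, ha⟩) ≠ 0 := hne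
    by_contra hlt
    exact hne' (Nat.choose_eq_zero_of_lt (by omega))
  have main : ∀ (b : ℕ) (hb : b < n) (a : ℕ) (ha : a < n), a ≤ b → t ⟨b, hb⟩ ≤ t ⟨a, ha⟩ := by
    intro b
    induction b with
    | zero =>
      intro hb a ha hab
      have : a = 0 := by omega
      subst this
      exact le_rfl
    | succ b ih =>
      intro hb a ha hab
      rcases Nat.eq_or_lt_of_le hab with rfl | hlt
      · exact le_rfl
      · exact le_trans (hfac b hb) (ih (by omega) a ha (by omega))
  intro i j hij
  have := main j.val j.isLt i.val i.isLt hij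
  simpa using this

theorem stmt10 (n : ℕ) (hn : 0 < n) :
    ∑ t ∈ partitionTuples n,
      (-1 : ℚ) ^ (1 + t ⟨0, hn⟩) * (binomProd n t : ℚ) * ((n : ℚ) / (t ⟨0, hn⟩ : ℚ)) *
        ∏ i : Fin n, ((2 * ((i : ℕ) + 1) - 1 : ℚ) / ((i : ℕ) + 1 : ℚ)) ^ (t i)
      = 2 ^ (n - 1) := by
  -- remove the filter
  unfold partitionTuples
  rw [Finset.sum_filter_of_ne (by
    intro t _ hne
    apply antitone_of_binomProd_ne_zero
    intro hbp
    exact hne (by rw [hbp]; push_cast; ring))]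
  obtain ⟨M, rfl⟩ : ∃ M, n = M + 1 := ⟨n - 1, by omega⟩
  -- canonical summand
  have hsummand : ∀ t ∈ Finset.Nat.antidiagonalTuple (M + 1) (M + 1),
      (-1 : ℚ) ^ (1 + t ⟨0, hn⟩) * (binomProd (M + 1) t : ℚ) * (((M + 1 : ℕ) : ℚ) / (t ⟨0, hn⟩ : ℚ)) *
        ∏ i : Fin (M + 1), ((2 * ((i : ℕ) + 1) - 1 : ℚ) / ((i : ℕ) + 1 : ℚ)) ^ (t i)
      = (-1 : ℚ) ^ (1 + headT (M + 1) t) * (binomProd (M + 1) t : ℚ)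
          * (((M : ℚ) + 1) / ((headT (M + 1) t : ℕ) : ℚ))
          * ∏ i : Fin (M + 1), wq ((i : ℕ) + 1) ^ (t i) := by
    intro t _
    have hh : headT (M + 1) t = t ⟨0, hn⟩ := by unfold headT; rw [dif_pos hn]
    rw [hh]
    have hw : ∀ i : Fin (M + 1), ((2 * ((i : ℕ) + 1) - 1 : ℚ) / ((i : ℕ) + 1 : ℚ))
        = wq ((i : ℕ) + 1) := by
      intro i; unfold wq; push_cast; ring_nf
    rw [Finset.prod_congr rfl fun i _ => by rw [hw i]]
    push_cast
    ring
  rw [Finset.sum_congr rfl hsummand]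
  rw [sum_adt_succ, Finset.Nat.sum_antidiagonal_eq_sum_range_succ_mk]
  -- coefficients of V agree with Bq
  have hagree : ∀ r, r ≤ M + 1 →
      PowerSeries.coeff r (V (M + 1) 0) = PowerSeries.coeff r Bq := by
    intro r hr
    have h1 : PowerSeries.coeff r (V (M + 1) 0)
        = PowerSeries.coeff r (1 + V (M + 1) 0) - PowerSeries.coeff r 1 := by
      rw [map_add]; ring
    rw [h1, coeff_one_add_V, if_pos hr, PowerSeries.coeff_one]
    have h2 : ∏ i ∈ Finset.range r, wq (0 + 1 + i) = aq r := by
      rw [aq_eq_prod]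
    rw [h2]
    unfold Bq
    rw [PowerSeries.coeff_mk]
    cases r with
    | zero => simp [aq]
    | succ r => simp
  have hpowagree := coeff_pow_eq_of_agree _ _ _ hagree
  -- inner sums
  have hinner : ∀ j ∈ Finset.range (M + 1 + 1),
      ∑ u ∈ Finset.Nat.antidiagonalTuple M ((j, M + 1 - j).2),
        ((-1 : ℚ) ^ (1 + headT (M + 1) (Fin.cons (j, M + 1 - j).1 u))
          * (binomProd (M + 1) (Fin.cons (j, M + 1 - j).1 u) : ℚ)
          * (((M : ℚ) + 1) / ((headT (M + 1) (Fin.cons (j, M + 1 - j).1 u) : ℕ) : ℚ))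
          * ∏ i : Fin (M + 1), wq ((i : ℕ) + 1) ^ (Fin.cons (j, M + 1 - j).1 u i))
      = (-1 : ℚ) ^ (1 + j) * (((M : ℚ) + 1) / (j : ℕ))
          * PowerSeries.coeff (M + 1) (Bq ^ j) := by
    intro j hj
    rw [Finset.mem_range] at hj
    rw [← hpowagree j (M + 1) le_rfl]
    have hVc : PowerSeries.coeff (M + 1) ((V (M + 1) 0) ^ j)
        = wq 1 ^ j * PowerSeries.coeff (M + 1 - j) ((1 + V M 1) ^ j) := by
      rw [show (V (M + 1) 0) ^ j
          = PowerSeries.C (wq (0 + 1) ^ j)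
              * (PowerSeries.X ^ j * (1 + V M (0 + 1)) ^ j) from V_pow M 0 j]
      rw [PowerSeries.coeff_C_mul, coeff_X_pow_mul_ite, if_pos (by omega)]
    rw [hVc, coeff_pow_one_add_V]
    rw [Finset.mul_sum, Finset.mul_sum]
    refine Finset.sum_congr rfl fun u _ => ?_
    have hh : headT (M + 1) (Fin.cons j u) = j := by
      unfold headT
      rw [dif_pos (by omega)]
      simp
    have hwp : ∏ i : Fin (M + 1), wq ((i : ℕ) + 1) ^ (Fin.cons j u i)
        = wq 1 ^ j * ∏ i : Fin M, wq (1 + 1 + (i : ℕ)) ^ u i := by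
      rw [Fin.prod_univ_succ]
      simp only [Fin.cons_zero, Fin.cons_succ, Fin.val_zero, Fin.val_succ, zero_add]
      congr 1
      exact Finset.prod_congr rfl fun i _ => by
        rw [show (i : ℕ) + 1 + 1 = 1 + 1 + (i : ℕ) by omega]
    rw [hh, binomProd_cons, hwp]
    push_cast
    ring
  rw [Finset.sum_congr rfl hinner]
  rw [show M + 1 - 1 = M from rfl]
  exact part2 M

end StmtAux
end
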